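/- The inverse of an invertible Z3-matrix of grade 1 is of grade 2, the inverse of an invertible grade-2 Z3-matrix is of grade 1, and the inverse of an invertible grade-0 Z3-matrix is of grade 0. -/

import Mathlib

noncomputable section

/-- `j = e^{2πi/3}`, a primitive cube root of unity. -/
def jj : ℂ := Complex.exp (2 * Real.pi * Complex.I / 3)

namespace Z3

/-- Generators: `Sum.inl i` is the grade-1 generator `θ_i`,
`Sum.inr i` is the grade-2 generator `θ̄_i`. -/
abbrev Gen (N : ℕ) := Fin N ⊕ Fin N

/-- Grade of a generator. -/
def genGrade {N : ℕ} : Gen N → ZMod 3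
  | Sum.inl _ => 1
  | Sum.inr _ => 2

/-- Grade of a word in the generators (sum of the grades mod 3). -/
def wGrade {N : ℕ} (w : List (Gen N)) : ZMod 3 := (w.map genGrade).sum

/-- The product in the free algebra of the letters of a word. -/
def wProd {N : ℕ} (w : List (Gen N)) : FreeAlgebra ℂ (Gen N) :=
  (w.map (FreeAlgebra.ι ℂ)).prod

/-- Defining relations of the `ℤ₃`-graded Grassmann algebra: homogeneous
grade-0 elements are central, and `A Ā = j Ā A` for `A` of grade 1 and `Ā` of
grade 2. -/
inductive Rel (N : ℕ) : FreeAlgebra ℂ (Gen N) → FreeAlgebra ℂ (Gen N) → Prop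
  | central (w₁ w₂ : List (Gen N)) (h : wGrade w₁ = 0) :
      Rel N (wProd w₁ * wProd w₂) (wProd w₂ * wProd w₁)
  | comm12 (w₁ w₂ : List (Gen N)) (h₁ : wGrade w₁ = 1) (h₂ : wGrade w₂ = 2) :
      Rel N (wProd w₁ * wProd w₂) (jj • (wProd w₂ * wProd w₁))

/-- The `ℤ₃`-graded Grassmann algebra on `N` grade-1 generators `θ_i` and `N`
grade-2 generators `θ̄_i`. -/
abbrev G (N : ℕ) := RingQuot (Rel N)

/-- The canonical quotient map. -/
def mk (N : ℕ) : FreeAlgebra ℂ (Gen N) →ₐ[ℂ] G N := RingQuot.mkAlgHom ℂ (Rel N)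

/-- The homogeneous component of grade `g`: the span of (classes of) words of
grade `g`. -/
def 𝒢 {N : ℕ} (g : ZMod 3) : Submodule ℂ (G N) :=
  Submodule.span ℂ {x | ∃ w : List (Gen N), wGrade w = g ∧ x = mk N (wProd w)}

/-- The "body" map on the free algebra, sending every generator to `0`. -/
def bodyF (N : ℕ) : FreeAlgebra ℂ (Gen N) →ₐ[ℂ] ℂ :=
  FreeAlgebra.lift ℂ (fun _ : Gen N => (0 : ℂ))

lemma bodyF_wProd_ne_nil {N : ℕ} (w : List (Gen N)) (hw : w ≠ []) :
    bodyF N (wProd w) = 0 := by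
  cases w with
  | nil => exact absurd rfl hw
  | cons a t =>
      simp only [wProd, List.map_cons, List.prod_cons, map_mul, bodyF,
        FreeAlgebra.lift_ι_apply, zero_mul]

lemma wGrade_ne_nil {N : ℕ} {w : List (Gen N)} {g : ZMod 3} (h : wGrade w = g)
    (hg : g ≠ 0) : w ≠ [] := by
  intro e; subst e; simp [wGrade] at h; exact hg h.symm

/-- The body (augmentation) map of the Grassmann algebra: coefficient of the
unit `I`. -/
def bodyA (N : ℕ) : G N →ₐ[ℂ] ℂ :=
  RingQuot.liftAlgHom ℂ ⟨bodyF N, by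
    intro x y h
    cases h with
    | central w₁ w₂ h => simp only [map_mul]; ring
    | comm12 w₁ w₂ h₁ h₂ =>
        have h1 : bodyF N (wProd w₁) = 0 :=
          bodyF_wProd_ne_nil w₁ (wGrade_ne_nil h₁ (by decide))
        simp [map_mul, map_smul, h1]⟩

end Z3

namespace Z3

/-- Index type for `3×3` block matrices with block sizes `n 0, n 1, n 2`. -/
abbrev Idx (n : Fin 3 → ℕ) := Σ r : Fin 3, Fin (n r)

/-- A `ℤ₃`-matrix: a `3×3` block matrix with Grassmann entries. -/
abbrev ZMat (N : ℕ) (n : Fin 3 → ℕ) := Matrix (Idx n) (Idx n) (G N)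

/-- A `ℤ₃`-matrix is homogeneous of grade `g` when the entry in block
position `(r,s)` has Grassmann grade `g + r - s (mod 3)` (equivalently, the
grade of the matrix is the sum mod 3 of the block-position grade `s - r` and
the Grassmann grade of the entries of that block). -/
def MGrade {N : ℕ} {n : Fin 3 → ℕ} (g : ZMod 3) (M : ZMat N n) : Prop :=
  ∀ p q : Idx n, M p q ∈ 𝒢 (g + (p.1.val : ZMod 3) - (q.1.val : ZMod 3))

/-- Weights of the three diagonal blocks appearing in the `ℤ₃`-trace and in
scalar multiplication: `(1, j^2, j)` raised to suitable powers. -/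
def wt : Fin 3 → ZMod 3 := ![0, 2, 1]

/-- The `ℤ₃`-trace of a `ℤ₃`-matrix of grade `g` with diagonal blocks
`A, E, I` is `tr A + j^{2(1-g)} tr E + j^{(1-g)} tr I`. -/
def ztrace {N : ℕ} {n : Fin 3 → ℕ} (g : ZMod 3) (M : ZMat N n) : G N :=
  ∑ p : Idx n, (jj ^ ((wt p.1 * (1 - g)).val)) • M p p

/-- The diagonal `ℤ₃`-matrix `diag(λ, j^{2∂λ} λ, j^{∂λ} λ)` implementing the
scalar multiplication by a homogeneous Grassmann element `λ` of grade `d`. -/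
def lamMat (N : ℕ) (n : Fin 3 → ℕ) (lam : G N) (d : ZMod 3) : ZMat N n :=
  Matrix.diagonal fun p => (jj ^ ((wt p.1 * d).val)) • lam

/-- Left product of a `ℤ₃`-matrix by a homogeneous Grassmann element of
grade `d`. -/
def smulL {N : ℕ} {n : Fin 3 → ℕ} (lam : G N) (d : ZMod 3) (M : ZMat N n) : ZMat N n :=
  lamMat N n lam d * M

/-- Right product of a `ℤ₃`-matrix by a homogeneous Grassmann element of
grade `d`. -/
def smulR {N : ℕ} {n : Fin 3 → ℕ} (M : ZMat N n) (lam : G N) (d : ZMod 3) : ZMat N n :=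
  M * lamMat N n lam d

end Z3

namespace Z3

lemma jj_cube : jj ^ 3 = 1 := by
  rw [jj, ← Complex.exp_nat_mul]
  rw [show (3:ℕ) * (2 * (Real.pi:ℂ) * Complex.I / 3) = 2 * Real.pi * Complex.I by push_cast; ring]
  exact Complex.exp_two_pi_mul_I

lemma jj_ne_one : jj ≠ 1 := by
  rw [jj]
  intro h
  rw [Complex.exp_eq_one_iff] at h
  obtain ⟨n, hn⟩ := h
  have hpi : (Real.pi : ℂ) ≠ 0 := by exact_mod_cast Real.pi_ne_zero
  have hne : (2 * (Real.pi:ℂ) * Complex.I) ≠ 0 := by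
    simp [Complex.I_ne_zero, hpi]
  field_simp at hn
  have h1 : (2 * (Real.pi:ℂ) * Complex.I) * 1 = (2 * (Real.pi:ℂ) * Complex.I) * ((n:ℂ) * 3) := by
    linear_combination (2 * (Real.pi:ℂ) * Complex.I) * hn
  have h2 : (1:ℂ) = (n:ℂ) * 3 := mul_left_cancel₀ hne h1
  have h3 : ((n * 3 : ℤ) : ℂ) = ((1:ℤ):ℂ) := by push_cast; linear_combination -h2
  have : (n * 3 : ℤ) = 1 := by exact_mod_cast h3
  omega

lemma jj_ne_zero : jj ≠ 0 := by
  intro h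
  have := jj_cube
  rw [h] at this; norm_num at this

lemma jj_sq_ne_one : jj ^ 2 ≠ 1 := by
  intro h
  have : jj = 1 := by
    calc jj = jj * (jj ^ 2) := by rw [h, mul_one]
    _ = 1 := by rw [← pow_succ']; exact jj_cube
  exact jj_ne_one this

lemma jj_sq_ne_jj : jj ^ 2 ≠ jj := by
  intro h
  have h1 : jj = 1 := by
    exact mul_left_cancel₀ jj_ne_zero (show jj * jj = jj * 1 by rw [mul_one, ← sq, h])
  exact jj_ne_one h1

lemma cube_sum {z : ℂ} (h3 : z ^ 3 = 1) (h1 : z ≠ 1) : 1 + z + z ^ 2 = 0 := by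
  have h : (z - 1) * (1 + z + z ^ 2) = 0 := by linear_combination h3
  rcases mul_eq_zero.mp h with h | h
  · exact absurd (sub_eq_zero.mp h) h1
  · exact h

lemma jj_pow_mod (m : ℕ) : jj ^ m = jj ^ (m % 3) := by
  conv_lhs => rw [← Nat.mod_add_div m 3, pow_add, pow_mul, jj_cube, one_pow, mul_one]

lemma jj_val_add (a b : ZMod 3) : jj ^ (a + b).val = jj ^ a.val * jj ^ b.val := by
  rw [← pow_add, ZMod.val_add, ← jj_pow_mod]

lemma jj_val_inj {a b : ZMod 3} (h : jj ^ a.val = jj ^ b.val) : a = b := by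
  have hcase : ∀ c : ZMod 3, c = 0 ∨ c = 1 ∨ c = 2 := by decide
  have v0 : (0 : ZMod 3).val = 0 := rfl
  have v1 : (1 : ZMod 3).val = 1 := rfl
  have v2 : (2 : ZMod 3).val = 2 := rfl
  rcases hcase a with ha | ha | ha <;> rcases hcase b with hb | hb | hb <;>
    subst ha <;> subst hb <;>
    simp only [v0, v1, v2, pow_zero, pow_one] at h <;>
    first
      | rfl
      | exact absurd h.symm jj_ne_one
      | exact absurd h jj_ne_one
      | exact absurd h.symm jj_sq_ne_one
      | exact absurd h jj_sq_ne_one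
      | exact absurd h.symm jj_sq_ne_jj
      | exact absurd h jj_sq_ne_jj

lemma wGrade_nil {N : ℕ} : wGrade ([] : List (Gen N)) = 0 := by simp [wGrade]

lemma wGrade_cons {N : ℕ} (a : Gen N) (t : List (Gen N)) :
    wGrade (a :: t) = genGrade a + wGrade t := by simp [wGrade]

lemma wProd_nil {N : ℕ} : wProd ([] : List (Gen N)) = 1 := by simp [wProd]

lemma wProd_cons {N : ℕ} (a : Gen N) (t : List (Gen N)) :
    wProd (a :: t) = FreeAlgebra.ι ℂ a * wProd t := by simp [wProd]

lemma wProd_append {N : ℕ} (w₁ w₂ : List (Gen N)) :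
    wProd (w₁ ++ w₂) = wProd w₁ * wProd w₂ := by simp [wProd]

lemma wGrade_append {N : ℕ} (w₁ w₂ : List (Gen N)) :
    wGrade (w₁ ++ w₂) = wGrade w₁ + wGrade w₂ := by simp [wGrade]

/-- The grading automorphism on the free algebra. -/
def sigmaF (N : ℕ) : FreeAlgebra ℂ (Gen N) →ₐ[ℂ] FreeAlgebra ℂ (Gen N) :=
  FreeAlgebra.lift ℂ (fun x : Gen N => jj ^ (genGrade x).val • FreeAlgebra.ι ℂ x)

lemma sigmaF_wProd {N : ℕ} (w : List (Gen N)) :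
    sigmaF N (wProd w) = jj ^ (wGrade w).val • wProd w := by
  induction w with
  | nil => simp [wProd_nil, wGrade_nil, map_one]
  | cons a t ih =>
      rw [wProd_cons, map_mul, ih, wGrade_cons, jj_val_add,
        sigmaF, FreeAlgebra.lift_ι_apply, smul_mul_assoc, mul_smul_comm,
        smul_smul]

/-- The grading automorphism on the Grassmann algebra. -/
def sigmaA (N : ℕ) : G N →ₐ[ℂ] G N :=
  RingQuot.liftAlgHom ℂ ⟨(mk N).comp (sigmaF N), by
    intro x y h
    cases h with
    | central w₁ w₂ h =>
        have hrel : mk N (wProd w₁ * wProd w₂) = mk N (wProd w₂ * wProd w₁) :=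
          RingQuot.mkAlgHom_rel ℂ (Rel.central w₁ w₂ h)
        simp only [AlgHom.comp_apply, map_mul, sigmaF_wProd, smul_mul_assoc,
          mul_smul_comm, map_smul]
        rw [← map_mul, ← map_mul, hrel]
        rw [smul_comm]
    | comm12 w₁ w₂ h₁ h₂ =>
        have hrel : mk N (wProd w₁ * wProd w₂) = mk N (jj • (wProd w₂ * wProd w₁)) :=
          RingQuot.mkAlgHom_rel ℂ (Rel.comm12 w₁ w₂ h₁ h₂)
        simp only [AlgHom.comp_apply, map_mul, map_smul, sigmaF_wProd, smul_mul_assoc,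
          mul_smul_comm]
        rw [← map_mul, ← map_mul, hrel, map_smul, h₁, h₂]
        simp only [smul_smul]
        congr 1
        ring⟩

lemma sigmaA_mk {N : ℕ} (x : FreeAlgebra ℂ (Gen N)) :
    sigmaA N (mk N x) = mk N (sigmaF N x) := by
  unfold sigmaA mk
  exact RingQuot.liftAlgHom_mkAlgHom_apply ..

lemma sigmaA_word {N : ℕ} (w : List (Gen N)) :
    sigmaA N (mk N (wProd w)) = jj ^ (wGrade w).val • mk N (wProd w) := by
  rw [sigmaA_mk, sigmaF_wProd, map_smul]

lemma mem_grade_sigma {N : ℕ} {g : ZMod 3} {x : G N} (hx : x ∈ 𝒢 g) :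
    sigmaA N x = jj ^ g.val • x := by
  induction hx using Submodule.span_induction with
  | mem a ha =>
      obtain ⟨w, hw, rfl⟩ := ha
      rw [← hw]
      exact sigmaA_word w
  | zero => simp
  | add a b _ _ ha hb => rw [map_add, ha, hb, smul_add]
  | smul c a _ ha => rw [map_smul, ha, smul_comm]

lemma span_words_mul {N : ℕ} {x y : G N}
    (hx : x ∈ Submodule.span ℂ {y : G N | ∃ w : List (Gen N), y = mk N (wProd w)})
    (hy : y ∈ Submodule.span ℂ {y : G N | ∃ w : List (Gen N), y = mk N (wProd w)}) :
    x * y ∈ Submodule.span ℂ {y : G N | ∃ w : List (Gen N), y = mk N (wProd w)} := by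
  induction hx using Submodule.span_induction with
  | mem u hu =>
      obtain ⟨w₁, rfl⟩ := hu
      induction hy using Submodule.span_induction with
      | mem v hv =>
          obtain ⟨w₂, rfl⟩ := hv
          exact Submodule.subset_span ⟨w₁ ++ w₂, by rw [wProd_append, map_mul]⟩
      | zero => rw [mul_zero]; exact Submodule.zero_mem _
      | add u v _ _ hu hv => rw [mul_add]; exact Submodule.add_mem _ hu hv
      | smul c u _ hu => rw [mul_smul_comm]; exact Submodule.smul_mem _ c hu
  | zero => rw [zero_mul]; exact Submodule.zero_mem _
  | add u v _ _ hu hv => rw [add_mul]; exact Submodule.add_mem _ hu hv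
  | smul c u _ hu => rw [smul_mul_assoc]; exact Submodule.smul_mem _ c hu

lemma mem_span_words {N : ℕ} (x : G N) :
    x ∈ Submodule.span ℂ {y : G N | ∃ w : List (Gen N), y = mk N (wProd w)} := by
  obtain ⟨a, rfl⟩ := RingQuot.mkAlgHom_surjective ℂ (Rel N) x
  have hmk : ∀ y, RingQuot.mkAlgHom ℂ (Rel N) y = mk N y := fun _ => rfl
  rw [hmk]
  induction a using FreeAlgebra.induction with
  | grade0 c =>
      have h1 : mk N (algebraMap ℂ _ c) = c • mk N (wProd ([] : List (Gen N))) := by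
        rw [wProd_nil, map_one, Algebra.algebraMap_eq_smul_one, map_smul, map_one]
      rw [h1]
      exact Submodule.smul_mem _ c (Submodule.subset_span ⟨[], rfl⟩)
  | grade1 i =>
      exact Submodule.subset_span ⟨[i], by rw [wProd_cons, wProd_nil, mul_one]⟩
  | mul a b ha hb =>
      rw [map_mul]
      exact span_words_mul ha hb
  | add a b ha hb => rw [map_add]; exact Submodule.add_mem _ ha hb

lemma sigma_eig_mem {N : ℕ} {g : ZMod 3} {x : G N}
    (h : sigmaA N x = jj ^ g.val • x) : x ∈ 𝒢 g := by
  set σ := (sigmaA N).toLinearMap with hσ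
  set P : G N →ₗ[ℂ] G N :=
    (3 : ℂ)⁻¹ • (LinearMap.id + jj ^ (-g).val • σ + jj ^ ((-g) * 2).val • (σ ∘ₗ σ)) with hPdef
  have happ : ∀ y : G N, P y = (3:ℂ)⁻¹ • (y + jj ^ (-g).val • sigmaA N y
      + jj ^ ((-g) * 2).val • sigmaA N (sigmaA N y)) := by
    intro y
    simp only [hPdef, hσ, LinearMap.smul_apply, LinearMap.add_apply, LinearMap.id_apply,
      LinearMap.comp_apply, AlgHom.toLinearMap_apply]
  have hword : ∀ w : List (Gen N), P (mk N (wProd w)) ∈ 𝒢 g := by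
    intro w
    have hs : sigmaA N (mk N (wProd w)) = jj ^ (wGrade w).val • mk N (wProd w) := sigmaA_word w
    have hs2 : sigmaA N (sigmaA N (mk N (wProd w)))
        = (jj ^ (wGrade w).val * jj ^ (wGrade w).val) • mk N (wProd w) := by
      rw [hs, map_smul, hs, smul_smul]
    have hPy : P (mk N (wProd w)) = ((3:ℂ)⁻¹ * (1 + jj ^ (-g).val * jj ^ (wGrade w).val +
        jj ^ ((-g) * 2).val * (jj ^ (wGrade w).val * jj ^ (wGrade w).val))) • mk N (wProd w) := by
      rw [happ, hs2, hs, smul_smul, smul_smul,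
        show mk N (wProd w) + (jj ^ (-g).val * jj ^ (wGrade w).val) • mk N (wProd w)
          + (jj ^ ((-g) * 2).val * (jj ^ (wGrade w).val * jj ^ (wGrade w).val)) • mk N (wProd w)
          = (1 + jj ^ (-g).val * jj ^ (wGrade w).val
            + jj ^ ((-g) * 2).val * (jj ^ (wGrade w).val * jj ^ (wGrade w).val)) • mk N (wProd w)
          by rw [add_smul, add_smul, one_smul], smul_smul]
    rw [hPy]
    by_cases hd : wGrade w = g
    · have hc : jj ^ (-g).val * jj ^ (wGrade w).val = 1 := by
        rw [← jj_val_add, show -g + wGrade w = 0 by rw [hd]; ring,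
          show ((0:ZMod 3)).val = 0 from rfl, pow_zero]
      have hc2 : jj ^ ((-g) * 2).val * (jj ^ (wGrade w).val * jj ^ (wGrade w).val) = 1 := by
        rw [show (-g) * 2 = -g + -g by ring, jj_val_add]
        linear_combination (jj ^ (-g).val * jj ^ (wGrade w).val + 1) * hc
      rw [hc, hc2, show ((3:ℂ)⁻¹ * (1 + 1 + 1)) = 1 by norm_num, one_smul]
      exact Submodule.subset_span ⟨w, hd, rfl⟩
    · have hc : jj ^ (-g).val * jj ^ (wGrade w).val = jj ^ (-g + wGrade w).val :=
        (jj_val_add _ _).symm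
      have hcube : (jj ^ (-g + wGrade w).val) ^ 3 = 1 := by
        rw [← pow_mul, mul_comm, pow_mul, jj_cube, one_pow]
      have hne1 : jj ^ (-g + wGrade w).val ≠ 1 := by
        intro h1
        apply hd
        have h0 : jj ^ (-g + wGrade w).val = jj ^ (0 : ZMod 3).val := by
          rw [h1, show ((0:ZMod 3)).val = 0 from rfl, pow_zero]
        have := jj_val_inj h0
        linear_combination this
      have hsum := cube_sum hcube hne1
      have hc2 : jj ^ ((-g) * 2).val * (jj ^ (wGrade w).val * jj ^ (wGrade w).val)
          = (jj ^ (-g + wGrade w).val) ^ 2 := by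
        rw [show (-g) * 2 = -g + -g by ring, jj_val_add, ← hc]
        ring
      rw [hc, hc2, show ((3:ℂ)⁻¹ * (1 + jj ^ (-g + wGrade w).val +
        (jj ^ (-g + wGrade w).val) ^ 2)) = 0 by rw [show (1:ℂ) + jj ^ (-g + wGrade w).val +
          (jj ^ (-g + wGrade w).val) ^ 2 = 0 from hsum]; ring, zero_smul]
      exact Submodule.zero_mem _
  have hP : ∀ y : G N, P y ∈ 𝒢 g := by
    intro y
    have h0 := mem_span_words y
    induction h0 using Submodule.span_induction with
    | mem a ha => obtain ⟨w, rfl⟩ := ha; exact hword w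
    | zero => rw [map_zero]; exact Submodule.zero_mem _
    | add a b _ _ ha hb => rw [map_add]; exact Submodule.add_mem _ ha hb
    | smul c a _ ha => rw [map_smul]; exact Submodule.smul_mem _ c ha
  have hc : jj ^ (-g).val * jj ^ g.val = 1 := by
    rw [← jj_val_add, show -g + g = 0 by ring, show ((0:ZMod 3)).val = 0 from rfl, pow_zero]
  have hc2 : jj ^ ((-g) * 2).val * (jj ^ g.val * jj ^ g.val) = 1 := by
    rw [show (-g) * 2 = -g + -g by ring, jj_val_add]
    linear_combination (jj ^ (-g).val * jj ^ g.val + 1) * hc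
  have hs2 : sigmaA N (sigmaA N x) = (jj ^ g.val * jj ^ g.val) • x := by
    rw [h, map_smul, h, smul_smul]
  have hx : P x = x := by
    rw [happ, hs2, h, smul_smul, smul_smul, hc, hc2, one_smul,
      show x + x + x = (3:ℂ) • x by
        rw [show (3:ℂ) = 1 + 1 + 1 by norm_num, add_smul, add_smul, one_smul],
      smul_smul]
    norm_num
  rw [← hx]
  exact hP x

/-- The grading map on `ℤ₃`-matrices. -/
def Phi {N : ℕ} {n : Fin 3 → ℕ} (M : ZMat N n) : ZMat N n :=
  Matrix.of fun p q => jj ^ (((q.1.val : ZMod 3) - (p.1.val : ZMod 3)).val) • sigmaA N (M p q)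

lemma Phi_one {N : ℕ} {n : Fin 3 → ℕ} : Phi (1 : ZMat N n) = 1 := by
  ext p q
  by_cases h : p = q
  · subst h
    simp [Phi, Matrix.one_apply_eq, map_one, sub_self, show ((0:ZMod 3)).val = 0 from rfl]
  · simp [Phi, Matrix.one_apply_ne h, map_zero, smul_zero]

lemma Phi_mul {N : ℕ} {n : Fin 3 → ℕ} (M M' : ZMat N n) :
    Phi (M * M') = Phi M * Phi M' := by
  ext p q
  simp only [Phi, Matrix.of_apply, Matrix.mul_apply, map_sum, map_mul, Finset.smul_sum]
  refine Finset.sum_congr rfl fun r _ => ?_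
  rw [smul_mul_assoc, mul_smul_comm, smul_smul, ← jj_val_add,
    show ((r.1.val : ZMod 3) - p.1.val) + ((q.1.val : ZMod 3) - r.1.val)
      = (q.1.val : ZMod 3) - p.1.val by ring]

lemma Phi_of_grade {N : ℕ} {n : Fin 3 → ℕ} {g : ZMod 3} {M : ZMat N n} (h : MGrade g M) :
    Phi M = jj ^ g.val • M := by
  ext p q
  simp only [Phi, Matrix.of_apply, Matrix.smul_apply]
  rw [mem_grade_sigma (h p q), smul_smul, ← jj_val_add,
    show (((q.1.val : ZMod 3)) - p.1.val) + (g + (p.1.val : ZMod 3) - q.1.val) = g by ring]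

lemma grade_of_Phi {N : ℕ} {n : Fin 3 → ℕ} {g : ZMod 3} {M : ZMat N n}
    (h : Phi M = jj ^ g.val • M) : MGrade g M := by
  intro p q
  have h1 : jj ^ (((q.1.val : ZMod 3)) - p.1.val).val • sigmaA N (M p q)
      = jj ^ g.val • M p q := by
    have := congrFun (congrFun h p) q
    simpa [Phi, Matrix.smul_apply] using this
  have h3 := congrArg (fun z => jj ^ (((p.1.val : ZMod 3)) - q.1.val).val • z) h1
  simp only [smul_smul, ← jj_val_add] at h3
  rw [show ((p.1.val : ZMod 3) - q.1.val) + ((q.1.val : ZMod 3) - p.1.val) = 0 by ring,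
    show ((p.1.val : ZMod 3) - q.1.val) + g = g + (p.1.val : ZMod 3) - q.1.val by ring,
    show ((0:ZMod 3)).val = 0 from rfl, pow_zero, one_smul] at h3
  exact sigma_eig_mem h3

lemma inv_grade {N : ℕ} {n : Fin 3 → ℕ} {g : ZMod 3} {M M' : ZMat N n} (hM : MGrade g M)
    (h1 : M * M' = 1) (h2 : M' * M = 1) : MGrade (-g) M' := by
  have hPM : Phi M = jj ^ g.val • M := Phi_of_grade hM
  have e1 : Phi M * Phi M' = 1 := by rw [← Phi_mul, h1, Phi_one]
  have key : jj ^ g.val • Phi M' = M' := by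
    calc jj ^ g.val • Phi M' = jj ^ g.val • ((M' * M) * Phi M') := by rw [h2, one_mul]
    _ = M' * ((jj ^ g.val • M) * Phi M') := by
        rw [smul_mul_assoc, mul_assoc, mul_smul_comm]
    _ = M' * (Phi M * Phi M') := by rw [hPM]
    _ = M' := by rw [e1, mul_one]
  have key2 : Phi M' = jj ^ (-g).val • M' := by
    conv_rhs => rw [← key]
    rw [smul_smul, ← jj_val_add, show -g + g = 0 by ring,
      show ((0:ZMod 3)).val = 0 from rfl, pow_zero, one_smul]
  exact grade_of_Phi key2

end Z3

/-- the inverse of an invertible grade-1 `ℤ₃`-matrix is of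
grade 2, the inverse of an invertible grade-2 `ℤ₃`-matrix is of grade 1, and
the inverse of an invertible grade-0 `ℤ₃`-matrix is of grade 0. -/
theorem grade_of_inverse (N : ℕ) (n : Fin 3 → ℕ) :
    (∀ M M' : Z3.ZMat N n, Z3.MGrade 1 M → M * M' = 1 → M' * M = 1 → Z3.MGrade 2 M') ∧
    (∀ M M' : Z3.ZMat N n, Z3.MGrade 2 M → M * M' = 1 → M' * M = 1 → Z3.MGrade 1 M') ∧
    (∀ M M' : Z3.ZMat N n, Z3.MGrade 0 M → M * M' = 1 → M' * M = 1 → Z3.MGrade 0 M') := by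
  refine ⟨fun M M' h h1 h2 => ?_, fun M M' h h1 h2 => ?_, fun M M' h h1 h2 => ?_⟩
  · have hg := Z3.inv_grade h h1 h2
    rwa [show -(1:ZMod 3) = 2 by decide] at hg
  · have hg := Z3.inv_grade h h1 h2
    rwa [show -(2:ZMod 3) = 1 by decide] at hg
  · have hg := Z3.inv_grade h h1 h2
    rwa [show -(0:ZMod 3) = 0 by decide] at hg
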